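/- Let α ≥ 0 be a real number. For any real constants c₁, c₂, the function φ(η) = c₁ M(−α/2, 1/2, −η²) + c₂ η M(−α/2 + 1/2, 3/2, −η²) is twice differentiable on ℝ and satisfies the ordinary differential equation φ''(η) + 2η φ'(η) − 2α φ(η) = 0 for all η ∈ ℝ. -/

import Mathlib

/-- Kummer confluent hypergeometric function `M(a,b,z) = ∑ (a)ₛ/((b)ₛ s!) zˢ`. -/
noncomputable def kummerM (a b z : ℝ) : ℝ :=
  ∑' n : ℕ, ((ascPochhammer ℝ n).eval a / ((ascPochhammer ℝ n).eval b * n.factorial)) * z ^ n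

/-- Error function `erf z = (2/√π) ∫₀ᶻ e^{-u²} du`. -/
noncomputable def erf (z : ℝ) : ℝ := (2 / Real.sqrt Real.pi) * ∫ u in (0:ℝ)..z, Real.exp (-u^2)

/-- Complementary error function. -/
noncomputable def erfc (z : ℝ) : ℝ := 1 - erf z

/-- Repeated integrals of the complementary error function:
`i⁰erfc = erfc`, `iⁿ⁺¹erfc z = ∫_z^∞ iⁿerfc t dt`. -/
noncomputable def inerfc : ℕ → ℝ → ℝ
  | 0 => erfc
  | (n+1) => fun z => ∫ t in Set.Ici z, inerfc n t



private lemma aux_cube_le (m : ℕ) : ((2*(m:ℝ)+4))^3 ≤ 64 * 8^m := by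
  induction m with
  | zero => norm_num
  | succ n ih =>
    have h2 : (0:ℝ) ≤ 2*(n:ℝ)+4 := by positivity
    push_cast
    have : (2*((n:ℝ)+1)+4)^3 ≤ 8 * (2*(n:ℝ)+4)^3 := by nlinarith [sq_nonneg ((n:ℝ)+1), sq_nonneg (n:ℝ)]
    calc (2*((n:ℝ)+1)+4)^3 ≤ 8 * (2*(n:ℝ)+4)^3 := this
      _ ≤ 8 * (64 * 8^n) := by linarith
      _ = 64 * 8^(n+1) := by ring

private lemma summable_majorant (C q : ℝ) (hC : 0 ≤ C) (hq : 0 ≤ q) :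
    Summable (fun k : ℕ => C * ((k:ℝ)+2)^3 * q^k / (k/2).factorial) := by
  apply Summable.even_add_odd
  · apply Summable.of_nonneg_of_le (f := fun m : ℕ => (64*C) * ((8*q^2)^m / m.factorial))
    · intro m; positivity
    · intro m
      have hdiv : ((2*m)/2 : ℕ) = m := by omega
      rw [hdiv]
      have hfac : (0:ℝ) < m.factorial := by exact_mod_cast m.factorial_pos
      rw [div_le_iff₀ hfac]
      rw [show (64:ℝ)*C * ((8*q^2)^m/(m.factorial:ℝ)) * m.factorial = 64*C*(8*q^2)^m from by field_simp]
      have h1 : ((2*m:ℕ):ℝ)+2 ≤ 2*(m:ℝ)+4 := by push_cast; linarith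
      have h3 : (((2*m:ℕ):ℝ)+2)^3 ≤ 64 * 8^m := by
        calc (((2*m:ℕ):ℝ)+2)^3 ≤ (2*(m:ℝ)+4)^3 := by
              apply pow_le_pow_left₀ (by positivity) h1
          _ ≤ 64 * 8^m := aux_cube_le m
      have hq2 : q^(2*m) = (q^2)^m := by rw [← pow_mul]
      calc C * (((2*m:ℕ):ℝ)+2)^3 * q^(2*m) ≤ C * (64*8^m) * q^(2*m) := by
            apply mul_le_mul_of_nonneg_right _ (by positivity)
            exact mul_le_mul_of_nonneg_left h3 hC
        _ = 64*C * ((8*q^2)^m) := by rw [hq2, mul_pow]; ring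
    · exact ((Real.summable_pow_div_factorial (8*q^2)).mul_left (64*C))
  · apply Summable.of_nonneg_of_le (f := fun m : ℕ => (64*C*q) * ((8*q^2)^m / m.factorial))
    · intro m; positivity
    · intro m
      have hdiv : ((2*m+1)/2 : ℕ) = m := by omega
      rw [hdiv]
      have hfac : (0:ℝ) < m.factorial := by exact_mod_cast m.factorial_pos
      rw [div_le_iff₀ hfac]
      rw [show (64:ℝ)*C*q * ((8*q^2)^m/(m.factorial:ℝ)) * m.factorial = 64*C*q*(8*q^2)^m from by field_simp]
      have h1 : ((2*m+1:ℕ):ℝ)+2 ≤ 2*(m:ℝ)+4 := by push_cast; linarith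
      have h3 : (((2*m+1:ℕ):ℝ)+2)^3 ≤ 64 * 8^m := by
        calc (((2*m+1:ℕ):ℝ)+2)^3 ≤ (2*(m:ℝ)+4)^3 := by
              apply pow_le_pow_left₀ (by positivity) h1
          _ ≤ 64 * 8^m := aux_cube_le m
      have hq2 : q^(2*m+1) = q * (q^2)^m := by rw [pow_succ, ← pow_mul]; ring
      calc C * (((2*m+1:ℕ):ℝ)+2)^3 * q^(2*m+1) ≤ C * (64*8^m) * q^(2*m+1) := by
            apply mul_le_mul_of_nonneg_right _ (by positivity)
            exact mul_le_mul_of_nonneg_left h3 hC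
        _ = 64*C*q * ((8*q^2)^m) := by rw [hq2, mul_pow]; ring
    · exact ((Real.summable_pow_div_factorial (8*q^2)).mul_left (64*C*q))


private lemma coeff_bound (α : ℝ) (hα : 0 ≤ α) (a : ℕ → ℝ)
    (hrec : ∀ k : ℕ, a (k+2) = 2*(α - (k:ℝ)) * a k / (((k:ℝ)+1)*((k:ℝ)+2))) :
    ∀ k, |a k| ≤ (max |a 0| |a 1|) * (max (2*(α+1)) 1)^k / (k/2).factorial := by
  set A := max |a 0| |a 1| with hA
  set b := max (2*(α+1)) 1 with hb
  have hA0 : 0 ≤ A := le_trans (abs_nonneg _) (le_max_left _ _)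
  have hb1 : (1:ℝ) ≤ b := le_max_right _ _
  have hb0 : (0:ℝ) < b := lt_of_lt_of_le one_pos hb1
  have key : ∀ k, (|a k| ≤ A * b^k / (k/2).factorial ∧
      |a (k+1)| ≤ A * b^(k+1) / ((k+1)/2).factorial) := by
    intro k
    induction k with
    | zero =>
      constructor
      · have h0 : |a 0| ≤ A := le_max_left _ _
        simpa using h0
      · have : |a 1| ≤ A := le_max_right _ _
        simpa using le_trans this (by nlinarith)
    | succ n ih =>
      refine ⟨ih.2, ?_⟩
      have e2 : ((n+2)/2 : ℕ) = n/2 + 1 := by omega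
      have hfac : (0:ℝ) < ((n/2).factorial : ℝ) := by exact_mod_cast (n/2).factorial_pos
      have hk1 : (0:ℝ) < (n:ℝ)+1 := by positivity
      have hk2 : (0:ℝ) < (n:ℝ)+2 := by positivity
      have habs : |α - (n:ℝ)| ≤ (α+1)*((n:ℝ)+1) := by
        rw [abs_sub_le_iff]
        constructor <;> nlinarith [Nat.cast_nonneg (α := ℝ) n]
      have hstep : |a (n+2)| ≤ A * b^(n+1) / (((n/2).factorial : ℝ) * ((n:ℝ)+2)) := by
        rw [hrec n, abs_div, abs_mul, abs_mul]
        have hden : |((n:ℝ)+1)*((n:ℝ)+2)| = ((n:ℝ)+1)*((n:ℝ)+2) := abs_of_pos (by positivity)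
        rw [hden, show |(2:ℝ)| = 2 from abs_of_pos two_pos]
        rw [div_le_div_iff₀ (by positivity) (by positivity)]
        have h1 : |a n| ≤ A * b^n / (n/2).factorial := ih.1
        have h2 : 2 * |α - (n:ℝ)| ≤ 2*(α+1)*((n:ℝ)+1) := by linarith
        have h3 : 2*(α+1) ≤ b := le_max_left _ _
        calc 2 * |α - ↑n| * |a n| * (((n/2).factorial:ℝ) * ((n:ℝ)+2))
            ≤ (2*(α+1)*((n:ℝ)+1)) * (A * b^n / (n/2).factorial) * (((n/2).factorial:ℝ) * ((n:ℝ)+2)) := by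
              apply mul_le_mul_of_nonneg_right _ (by positivity)
              apply mul_le_mul h2 h1 (abs_nonneg _) (by positivity)
          _ = (2*(α+1)) * (A * b^n) * (((n:ℝ)+1) * ((n:ℝ)+2)) := by field_simp
          _ ≤ b * (A * b^n) * (((n:ℝ)+1) * ((n:ℝ)+2)) := by
              apply mul_le_mul_of_nonneg_right _ (by positivity)
              apply mul_le_mul_of_nonneg_right h3 (by positivity)
          _ = A * b^(n+1) * (((n:ℝ)+1)*((n:ℝ)+2)) := by ring
      refine le_trans hstep ?_
      rw [e2, Nat.factorial_succ]
      push_cast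
      rw [div_le_div_iff₀ (by positivity) (by positivity)]
      have hm : ((n/2 : ℕ):ℝ) + 1 ≤ (n:ℝ) + 2 := by
        have : (n/2 : ℕ) ≤ n := Nat.div_le_self n 2
        have := (Nat.cast_le (α := ℝ)).mpr this
        linarith
      have hbpow : A * b^(n+1) ≤ A * b^(n+2) := by
        apply mul_le_mul_of_nonneg_left _ hA0
        apply pow_le_pow_right₀ hb1 (by omega)
      calc A * b^(n+1) * ((((n/2:ℕ):ℝ)+1) * ((n/2:ℕ).factorial:ℝ))
          ≤ A * b^(n+2) * ((((n/2:ℕ):ℝ)+1) * ((n/2:ℕ).factorial:ℝ)) := by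
            apply mul_le_mul_of_nonneg_right hbpow (by positivity)
        _ ≤ A * b^(n+2) * (((n/2:ℕ).factorial:ℝ) * ((n:ℝ)+2)) := by
            apply mul_le_mul_of_nonneg_left _ (by positivity)
            rw [mul_comm (((n/2:ℕ).factorial:ℝ))]
            apply mul_le_mul_of_nonneg_right hm (by positivity)
  intro k; exact (key k).1


private noncomputable def kcoeff (α c₁ c₂ : ℝ) : ℕ → ℝ := fun k =>
  if Even k then
    c₁ * (-1)^(k/2) * ((ascPochhammer ℝ (k/2)).eval (-α/2) /
      ((ascPochhammer ℝ (k/2)).eval (1/2) * (k/2).factorial))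
  else
    c₂ * (-1)^(k/2) * ((ascPochhammer ℝ (k/2)).eval (-α/2 + 1/2) /
      ((ascPochhammer ℝ (k/2)).eval (3/2) * (k/2).factorial))

private lemma kcoeff_even (α c₁ c₂ : ℝ) (m : ℕ) :
    kcoeff α c₁ c₂ (2*m) = c₁ * (-1)^m * ((ascPochhammer ℝ m).eval (-α/2) /
      ((ascPochhammer ℝ m).eval (1/2) * m.factorial)) := by
  have h : Even (2*m) := even_two_mul m
  have hd : (2*m)/2 = m := by omega
  simp only [kcoeff, if_pos h, hd]

private lemma kcoeff_odd (α c₁ c₂ : ℝ) (m : ℕ) :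
    kcoeff α c₁ c₂ (2*m+1) = c₂ * (-1)^m * ((ascPochhammer ℝ m).eval (-α/2 + 1/2) /
      ((ascPochhammer ℝ m).eval (3/2) * m.factorial)) := by
  have h : ¬ Even (2*m+1) := by simp [Nat.even_iff, Nat.add_mod, Nat.mul_mod]
  have hd : (2*m+1)/2 = m := by omega
  simp only [kcoeff, if_neg h, hd]

private lemma kcoeff_rec (α c₁ c₂ : ℝ) (k : ℕ) :
    kcoeff α c₁ c₂ (k+2) =
      2*(α - (k:ℝ)) * kcoeff α c₁ c₂ k / (((k:ℝ)+1)*((k:ℝ)+2)) := by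
  have hhalf : (0:ℝ) < 1/2 := by norm_num
  rcases Nat.even_or_odd k with ⟨n, hn⟩ | ⟨n, hn⟩
  · have hk : k = 2*n := by omega
    subst hk
    have e1 : 2*n+2 = 2*(n+1) := by ring
    rw [e1, kcoeff_even, kcoeff_even]
    have hp : (0:ℝ) < (ascPochhammer ℝ n).eval (1/2) := ascPochhammer_pos n _ (by norm_num)
    have hfac : (0:ℝ) < (n.factorial : ℝ) := by exact_mod_cast n.factorial_pos
    rw [ascPochhammer_succ_eval, ascPochhammer_succ_eval, Nat.factorial_succ]
    have h1 : ((1:ℝ)/2 + n) ≠ 0 := by positivity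
    have h2 : ((2*n:ℕ):ℝ) + 1 ≠ 0 := by positivity
    have h3 : ((2*n:ℕ):ℝ) + 2 ≠ 0 := by positivity
    have h4 : ((n+1:ℕ):ℝ) ≠ 0 := by positivity
    push_cast
    rw [pow_succ]
    field_simp
    ring
  · have hk : k = 2*n+1 := hn
    subst hk
    have e1 : 2*n+1+2 = 2*(n+1)+1 := by ring
    rw [e1, kcoeff_odd, kcoeff_odd]
    have hp : (0:ℝ) < (ascPochhammer ℝ n).eval (3/2) := ascPochhammer_pos n _ (by norm_num)
    have hfac : (0:ℝ) < (n.factorial : ℝ) := by exact_mod_cast n.factorial_pos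
    rw [ascPochhammer_succ_eval, ascPochhammer_succ_eval, Nat.factorial_succ]
    have h1 : ((3:ℝ)/2 + n) ≠ 0 := by positivity
    push_cast
    rw [pow_succ]
    field_simp
    ring



section
variable {A b : ℝ} {c : ℕ → ℝ}

private lemma term_bound (hA : 0 ≤ A) (hb : 1 ≤ b)
    (hc : ∀ k, |c k| ≤ A * b^k / (k/2).factorial) {R : ℝ} (hR : 1 ≤ R)
    {y : ℝ} (hy : |y| ≤ R) (k : ℕ) :
    |c k * ((k:ℝ) * y^(k-1))| ≤ (A*R) * ((k:ℝ)+2)^3 * (b*R)^k / (k/2).factorial := by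
  have hb0 : (0:ℝ) < b := lt_of_lt_of_le one_pos hb
  have hR0 : (0:ℝ) < R := lt_of_lt_of_le one_pos hR
  have hy0 : 0 ≤ |y| := abs_nonneg _
  have hfac : (0:ℝ) < ((k/2).factorial : ℝ) := by exact_mod_cast (k/2).factorial_pos
  rw [abs_mul, abs_mul, abs_pow, Nat.abs_cast]
  have hyR : |y|^(k-1) ≤ R^(k-1) := pow_le_pow_left₀ (abs_nonneg _) hy _
  have hRk : R^(k-1) ≤ R^k := pow_le_pow_right₀ hR (Nat.sub_le _ _)
  have hk3 : (k:ℝ) ≤ ((k:ℝ)+2)^3 := by nlinarith [Nat.cast_nonneg (α := ℝ) k, sq_nonneg ((k:ℝ)+2)]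
  calc |c k| * ((k:ℝ) * |y|^(k-1))
      ≤ (A * b^k / (k/2).factorial) * ((k:ℝ) * R^k) := by
        apply mul_le_mul (hc k) _ (by positivity) (by positivity)
        exact mul_le_mul_of_nonneg_left (le_trans hyR hRk) (Nat.cast_nonneg k)
    _ = A * ((k:ℝ) * (b*R)^k) / (k/2).factorial := by rw [mul_pow]; ring
    _ ≤ A * (((k:ℝ)+2)^3 * (b*R)^k) / (k/2).factorial := by gcongr
    _ = A * ((k:ℝ)+2)^3 * (b*R)^k / (k/2).factorial := by ring
    _ ≤ (A*R) * ((k:ℝ)+2)^3 * (b*R)^k / (k/2).factorial := by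
        gcongr
        nlinarith

private lemma term_bound0 (hA : 0 ≤ A) (hb : 1 ≤ b)
    (hc : ∀ k, |c k| ≤ A * b^k / (k/2).factorial) (y : ℝ) (k : ℕ) :
    |c k * y^k| ≤ A * ((k:ℝ)+2)^3 * (b*(|y|+1))^k / (k/2).factorial := by
  have hb0 : (0:ℝ) < b := lt_of_lt_of_le one_pos hb
  have hy0 : 0 ≤ |y| := abs_nonneg _
  have hfac : (0:ℝ) < ((k/2).factorial : ℝ) := by exact_mod_cast (k/2).factorial_pos
  rw [abs_mul, abs_pow]
  have h23 : (1:ℝ) ≤ ((k:ℝ)+2)^3 := by nlinarith [Nat.cast_nonneg (α := ℝ) k, sq_nonneg ((k:ℝ)+2)]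
  calc |c k| * |y|^k ≤ (A * b^k / (k/2).factorial) * (|y|+1)^k := by
        apply mul_le_mul (hc k) (pow_le_pow_left₀ hy0 (by linarith) k) (by positivity) (by positivity)
    _ = A * 1 * (b*(|y|+1))^k / (k/2).factorial := by rw [mul_pow]; ring
    _ ≤ A * ((k:ℝ)+2)^3 * (b*(|y|+1))^k / (k/2).factorial := by gcongr

private lemma summable_term (hA : 0 ≤ A) (hb : 1 ≤ b)
    (hc : ∀ k, |c k| ≤ A * b^k / (k/2).factorial) (y : ℝ) :
    Summable (fun k => c k * y^k) := by
  have hb0 : (0:ℝ) < b := lt_of_lt_of_le one_pos hb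
  apply Summable.of_abs
  apply Summable.of_nonneg_of_le (fun k => abs_nonneg _) (term_bound0 hA hb hc y)
  exact summable_majorant A (b*(|y|+1)) hA (by positivity)

private lemma summable_dterm (hA : 0 ≤ A) (hb : 1 ≤ b)
    (hc : ∀ k, |c k| ≤ A * b^k / (k/2).factorial) (y : ℝ) :
    Summable (fun k => c k * ((k:ℝ) * y^(k-1))) := by
  have hb0 : (0:ℝ) < b := lt_of_lt_of_le one_pos hb
  have hR : (1:ℝ) ≤ |y|+1 := by have := abs_nonneg y; linarith
  apply Summable.of_abs
  apply Summable.of_nonneg_of_le (fun k => abs_nonneg _)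
    (term_bound hA hb hc hR (by linarith))
  exact summable_majorant (A*(|y|+1)) (b*(|y|+1)) (by positivity) (by positivity)

private lemma deriv_term (hA : 0 ≤ A) (hb : 1 ≤ b)
    (hc : ∀ k, |c k| ≤ A * b^k / (k/2).factorial) (x : ℝ) :
    HasDerivAt (fun y => ∑' k, c k * y^k) (∑' k, c k * ((k:ℝ) * x^(k-1))) x := by
  have hb0 : (0:ℝ) < b := lt_of_lt_of_le one_pos hb
  set R : ℝ := |x| + 1 with hRdef
  have hR : (1:ℝ) ≤ R := by rw [hRdef]; linarith [abs_nonneg x]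
  have hR0 : (0:ℝ) < R := by linarith
  apply hasDerivAt_tsum_of_isPreconnected
    (g := fun (k : ℕ) (y : ℝ) => c k * y^k)
    (g' := fun (k : ℕ) (y : ℝ) => c k * ((k:ℝ) * y^(k-1)))
    (u := fun k : ℕ => (A*R) * ((k:ℝ)+2)^3 * (b*R)^k / (k/2).factorial)
    (t := Set.Ioo (-R) R) (y₀ := 0)
  · exact summable_majorant (A*R) (b*R) (by positivity) (by positivity)
  · exact isOpen_Ioo
  · exact (convex_Ioo _ _).isPreconnected
  · intro k y _
    exact (hasDerivAt_pow k y).const_mul (c k)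
  · intro k y hy
    have hyR : |y| ≤ R := le_of_lt (abs_lt.mpr ⟨hy.1, hy.2⟩)
    rw [Real.norm_eq_abs]
    exact term_bound hA hb hc hR hyR k
  · constructor
    · simp [hR0]
    · exact hR0
  · apply summable_of_ne_finset_zero (s := {0})
    intro k hk
    simp only [Finset.mem_singleton] at hk
    simp [zero_pow hk]
  · constructor
    · have : -R < x := by cases abs_lt.mp (show |x| < R by simp [hRdef]) with
        | intro h1 h2 => exact h1
      exact this
    · have : |x| < R := by simp [hRdef]
      exact (abs_lt.mp this).2

private lemma shift_bound (hA : 0 ≤ A) (hb : 1 ≤ b)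
    (hc : ∀ k, |c k| ≤ A * b^k / (k/2).factorial) (k : ℕ) :
    |((k:ℝ)+1) * c (k+1)| ≤ (A*b) * (2*b)^k / (k/2).factorial := by
  have hb0 : (0:ℝ) < b := lt_of_lt_of_le one_pos hb
  have hfac : (0:ℝ) < ((k/2).factorial : ℝ) := by exact_mod_cast (k/2).factorial_pos
  have hfacle : ((k/2).factorial : ℝ) ≤ (((k+1)/2).factorial : ℝ) := by
    exact_mod_cast Nat.factorial_le (by omega)
  have hfac2 : (0:ℝ) < (((k+1)/2).factorial : ℝ) := by exact_mod_cast ((k+1)/2).factorial_pos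
  have h2k : (k:ℝ)+1 ≤ 2^k := by exact_mod_cast (Nat.lt_two_pow_self (n := k))
  rw [abs_mul, show |(k:ℝ)+1| = (k:ℝ)+1 from abs_of_pos (by positivity)]
  calc ((k:ℝ)+1) * |c (k+1)| ≤ ((k:ℝ)+1) * (A * b^(k+1) / ((k+1)/2).factorial) := by
        apply mul_le_mul_of_nonneg_left (hc (k+1)) (by positivity)
    _ ≤ ((k:ℝ)+1) * (A * b^(k+1) / (k/2).factorial) := by gcongr
    _ ≤ 2^k * (A * b^(k+1) / (k/2).factorial) := by
        apply mul_le_mul_of_nonneg_right h2k (by positivity)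
    _ = (A*b) * (2*b)^k / (k/2).factorial := by rw [mul_pow]; ring

end

private lemma deriv_term' {A b : ℝ} {c : ℕ → ℝ} (hA : 0 ≤ A) (hb : 1 ≤ b)
    (hc : ∀ k, |c k| ≤ A * b^k / (k/2).factorial) (x : ℝ) :
    HasDerivAt (fun y => ∑' k, c k * y^k) (∑' k : ℕ, (((k:ℝ)+1) * c (k+1)) * x^k) x := by
  have h := deriv_term hA hb hc x
  have hs := summable_dterm hA hb hc x
  have e : (∑' k, c k * ((k:ℝ) * x^(k-1))) = ∑' k : ℕ, (((k:ℝ)+1) * c (k+1)) * x^k := by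
    rw [Summable.tsum_eq_zero_add hs]
    simp only [Nat.cast_zero, zero_mul, mul_zero, zero_add]
    exact tsum_congr fun k => by push_cast [Nat.add_sub_cancel]; ring
  exact e ▸ h


/-- For `α ≥ 0`, the function `φ(η) = c₁ M(-α/2,1/2,-η²) + c₂ η M(-α/2+1/2,3/2,-η²)`
is twice differentiable and satisfies `φ'' + 2ηφ' - 2αφ = 0`. -/
theorem kummer_combination_solves_ode
    (α : ℝ) (hα : 0 ≤ α) (c₁ c₂ : ℝ) (φ : ℝ → ℝ)
    (hφ : ∀ η : ℝ, φ η = c₁ * kummerM (-α / 2) (1 / 2) (-η ^ 2) +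
        c₂ * η * kummerM (-α / 2 + 1 / 2) (3 / 2) (-η ^ 2)) :
    (∀ η : ℝ, DifferentiableAt ℝ φ η) ∧
    (∀ η : ℝ, DifferentiableAt ℝ (deriv φ) η) ∧
    (∀ η : ℝ, deriv (deriv φ) η + 2 * η * deriv φ η - 2 * α * φ η = 0) := by
  classical
  set a : ℕ → ℝ := kcoeff α c₁ c₂ with hadef
  have hrec : ∀ k : ℕ, a (k+2) = 2*(α - (k:ℝ)) * a k / (((k:ℝ)+1)*((k:ℝ)+2)) :=
    kcoeff_rec α c₁ c₂
  obtain ⟨A, b, hA, hb, hbnd⟩ :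
      ∃ A b : ℝ, 0 ≤ A ∧ 1 ≤ b ∧ ∀ k, |a k| ≤ A*b^k/(k/2).factorial :=
    ⟨_, _, le_trans (abs_nonneg _) (le_max_left _ _), le_max_right _ _,
      coeff_bound α hα a hrec⟩
  have hb0 : (0:ℝ) < b := lt_of_lt_of_le one_pos hb
  set c1 : ℕ → ℝ := fun k => ((k:ℝ)+1) * a (k+1) with hc1def
  set c2 : ℕ → ℝ := fun k => ((k:ℝ)+1) * c1 (k+1) with hc2def
  have hbnd1 : ∀ k, |c1 k| ≤ (A*b)*(2*b)^k/(k/2).factorial := fun k => shift_bound hA hb hbnd k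
  have hA1 : (0:ℝ) ≤ A*b := by positivity
  have hb1 : (1:ℝ) ≤ 2*b := by linarith
  have hbnd2 : ∀ k, |c2 k| ≤ ((A*b)*(2*b))*(2*(2*b))^k/(k/2).factorial :=
    fun k => shift_bound hA1 hb1 hbnd1 k
  have hA2 : (0:ℝ) ≤ (A*b)*(2*b) := by positivity
  have hb2 : (1:ℝ) ≤ 2*(2*b) := by linarith
  set f : ℝ → ℝ := fun x => ∑' k, a k * x^k with hfdef
  set f1 : ℝ → ℝ := fun x => ∑' k, c1 k * x^k with hf1def
  set f2 : ℝ → ℝ := fun x => ∑' k, c2 k * x^k with hf2def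
  have hd1 : ∀ x, HasDerivAt f (f1 x) x := fun x => deriv_term' hA hb hbnd x
  have hd2 : ∀ x, HasDerivAt f1 (f2 x) x := fun x => deriv_term' hA1 hb1 hbnd1 x
  -- φ = f
  have hφf : φ = f := by
    funext η
    rw [hφ η]
    have hS : Summable (fun k => a k * η^k) := summable_term hA hb hbnd η
    have he : Summable (fun m : ℕ => a (2*m) * η^(2*m)) := by
      have := hS.comp_injective (i := fun m : ℕ => 2*m) (fun i j h => by simp only at h; omega)
      exact this
    have ho : Summable (fun m : ℕ => a (2*m+1) * η^(2*m+1)) := by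
      have := hS.comp_injective (i := fun m : ℕ => 2*m+1) (fun i j h => by simp only at h; omega)
      exact this
    have hev : ∑' m : ℕ, a (2*m) * η^(2*m) = c₁ * kummerM (-α/2) (1/2) (-η^2) := by
      have hpt : ∀ m : ℕ, a (2*m) * η^(2*m) =
          c₁ * (((ascPochhammer ℝ m).eval (-α/2) /
            ((ascPochhammer ℝ m).eval (1/2) * m.factorial)) * (-η^2)^m) := by
        intro m
        rw [hadef]
        rw [kcoeff_even α c₁ c₂ m]
        rw [show (-η^2)^m = (-1)^m * (η^2)^m from by rw [neg_pow], ← pow_mul]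
        ring
      rw [tsum_congr hpt, tsum_mul_left, kummerM]
    have hod : ∑' m : ℕ, a (2*m+1) * η^(2*m+1) =
        c₂ * η * kummerM (-α/2 + 1/2) (3/2) (-η^2) := by
      have hpt : ∀ m : ℕ, a (2*m+1) * η^(2*m+1) =
          (c₂ * η) * (((ascPochhammer ℝ m).eval (-α/2 + 1/2) /
            ((ascPochhammer ℝ m).eval (3/2) * m.factorial)) * (-η^2)^m) := by
        intro m
        rw [hadef]
        rw [kcoeff_odd α c₁ c₂ m]
        rw [show (-η^2)^m = (-1)^m * (η^2)^m from by rw [neg_pow]]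
        rw [pow_succ, ← pow_mul]
        ring
      rw [tsum_congr hpt, tsum_mul_left, kummerM]
    rw [← hev, ← hod]
    exact tsum_even_add_odd (f := fun k => a k * η^k) he ho
  have hdφ : deriv φ = f1 := by
    rw [hφf]; exact funext fun x => (hd1 x).deriv
  have hddφ : deriv (deriv φ) = f2 := by
    rw [hdφ]; exact funext fun x => (hd2 x).deriv
  refine ⟨?_, ?_, ?_⟩
  · intro η; rw [hφf]; exact (hd1 η).differentiableAt
  · intro η; rw [hdφ]; exact (hd2 η).differentiableAt
  · intro x
    rw [hddφ, hdφ, hφf]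
    have S0 : Summable (fun k => a k * x^k) := summable_term hA hb hbnd x
    have SD : Summable (fun k => c1 k * x^k) := summable_term hA1 hb1 hbnd1 x
    have S2 : Summable (fun k => c2 k * x^k) := summable_term hA2 hb2 hbnd2 x
    set j : ℕ → ℝ := fun k => 2*(k:ℝ)*a k*x^k with hjdef
    have hj : ∀ k, j (k+1) = (2*x)*(c1 k * x^k) := by
      intro k
      rw [hjdef, hc1def]
      push_cast
      ring
    have Sj : Summable j := by
      refine (summable_nat_add_iff 1).mp ?_
      exact Summable.congr (SD.mul_left (2*x)) (fun k => (hj k).symm)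
    have h2x : 2*x*f1 x = ∑' k, j k := by
      have hj0 : j 0 = 0 := by rw [hjdef]; simp
      calc 2*x*f1 x = ∑' k, (2*x)*(c1 k * x^k) := (tsum_mul_left).symm
        _ = ∑' k, j (k+1) := tsum_congr fun k => (hj k).symm
        _ = j 0 + ∑' k, j (k+1) := by rw [hj0, zero_add]
        _ = ∑' k, j k := (Summable.tsum_eq_zero_add Sj).symm
    have expand : ∑' k, (c2 k * x^k + j k - 2*α*(a k * x^k)) =
        (∑' k, c2 k * x^k) + (∑' k, j k) - 2*α*(∑' k, a k*x^k) := by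
      rw [Summable.tsum_sub (S2.add Sj) (S0.mul_left (2*α)), Summable.tsum_add S2 Sj, tsum_mul_left]
    have hzero : ∀ k : ℕ, c2 k * x^k + j k - 2*α*(a k * x^k) = 0 := by
      intro k
      rw [hc2def, hc1def, hjdef]
      simp only []
      rw [hrec k]
      have h1 : ((k:ℝ)+1) ≠ 0 := by positivity
      have h2 : ((k:ℝ)+2) ≠ 0 := by positivity
      push_cast
      field_simp
      ring
    calc f2 x + 2*x*f1 x - 2*α*f x
        = (∑' k, c2 k * x^k) + (∑' k, j k) - 2*α*(∑' k, a k*x^k) := by rw [h2x]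
      _ = ∑' k, (c2 k * x^k + j k - 2*α*(a k * x^k)) := expand.symm
      _ = ∑' k, (0:ℝ) := tsum_congr hzero
      _ = 0 := tsum_zero
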